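/- Let μ > −1 and let P_{j,ν}^{n,μ}(x) = P_j^{(μ, n−2j+(d−2)/2)}(2‖x‖²−1) Y_ν^{n−2j}(x), where Y_ν^{n−2j} is a spherical harmonic of degree n−2j with L²(S^{d−1})-norm 1. Then Δ P_{j,ν}^{n,μ}(x) = 4(n−j+μ+d/2)(n−j+(d−2)/2) P_{j−1,ν}^{n−2,μ+2}(x) for j ≥ 1, and Δ P_{0,ν}^{n,μ} = 0. -/

import Mathlib

open scoped BigOperators
open MeasureTheory

noncomputable def poch (a : ℝ) (n : ℕ) : ℝ := ∏ i ∈ Finset.range n, (a + i)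

noncomputable def gegenbauer (n : ℕ) (lam t : ℝ) : ℝ :=
  ∑ k ∈ Finset.range (n / 2 + 1),
    (-1 : ℝ) ^ k * poch lam (n - k) /
      ((Nat.factorial k : ℝ) * (Nat.factorial (n - 2 * k) : ℝ)) * (2 * t) ^ (n - 2 * k)

noncomputable def jacobi (j : ℕ) (a b t : ℝ) : ℝ :=
  poch (a + 1) j / (Nat.factorial j : ℝ) *
    ∑ k ∈ Finset.range (j + 1),
      poch (-(j : ℝ)) k * poch ((j : ℝ) + a + b + 1) k /
        (poch (a + 1) k * (Nat.factorial k : ℝ)) * ((1 - t) / 2) ^ k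

noncomputable def pd {d : ℕ} (i : Fin d) (f : EuclideanSpace ℝ (Fin d) → ℝ)
    (x : EuclideanSpace ℝ (Fin d)) : ℝ :=
  fderiv ℝ f x (EuclideanSpace.single i 1)

noncomputable def lap {d : ℕ} (f : EuclideanSpace ℝ (Fin d) → ℝ)
    (x : EuclideanSpace ℝ (Fin d)) : ℝ :=
  ∑ i, pd i (pd i f) x

noncomputable def Dang {d : ℕ} (i j : Fin d) (f : EuclideanSpace ℝ (Fin d) → ℝ)
    (x : EuclideanSpace ℝ (Fin d)) : ℝ :=
  x i * pd j f x - x j * pd i f x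

noncomputable def lapS {d : ℕ} (f : EuclideanSpace ℝ (Fin d) → ℝ)
    (x : EuclideanSpace ℝ (Fin d)) : ℝ :=
  ∑ p ∈ Finset.univ.filter (fun p : Fin d × Fin d => p.1 < p.2),
    Dang p.1 p.2 (Dang p.1 p.2 f) x

lemma poch_zero (a : ℝ) : poch a 0 = 1 := by simp [poch]

lemma poch_succ (a : ℝ) (n : ℕ) : poch a (n+1) = poch a n * (a + n) := by
  simp [poch, Finset.prod_range_succ]

lemma poch_succ_left (a : ℝ) (n : ℕ) : poch a (n+1) = a * poch (a+1) n := by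
  rw [poch, Finset.prod_range_succ']
  simp only [Nat.cast_zero, add_zero, mul_comm]
  congr 1
  · apply Finset.prod_congr rfl
    intro i _
    push_cast
    ring

lemma poch_pos (a : ℝ) (ha : 0 < a) (n : ℕ) : 0 < poch a n := by
  apply Finset.prod_pos
  intro i _
  positivity

lemma poch_neg_nat (j k : ℕ) (h : j < k) : poch (-(j:ℝ)) k = 0 := by
  apply Finset.prod_eq_zero (Finset.mem_range.2 h)
  simp

noncomputable def jc (j : ℕ) (a b : ℝ) (k : ℕ) : ℝ :=
  poch (a + 1) j / (Nat.factorial j : ℝ) *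
    (poch (-(j : ℝ)) k * poch ((j : ℝ) + a + b + 1) k /
      (poch (a + 1) k * (Nat.factorial k : ℝ)))

lemma jacobi_eq_sum (j : ℕ) (a b t : ℝ) :
    jacobi j a b t = ∑ k ∈ Finset.range (j+1), jc j a b k * ((1 - t)/2) ^ k := by
  rw [jacobi, Finset.mul_sum]
  apply Finset.sum_congr rfl
  intro k _
  rw [jc]; ring

noncomputable def jD1 (j : ℕ) (a b t : ℝ) : ℝ :=
  ∑ k ∈ Finset.range (j+1), jc j a b k * ((k:ℝ) * ((1 - t)/2) ^ (k-1) * (-(1/2) : ℝ))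

noncomputable def jD2 (j : ℕ) (a b t : ℝ) : ℝ :=
  ∑ k ∈ Finset.range (j+1),
    jc j a b k * ((k:ℝ) * (((k-1:ℕ):ℝ) * ((1 - t)/2) ^ (k-1-1) * (-(1/2) : ℝ)) * (-(1/2) : ℝ))

lemma hasDerivAt_u (t : ℝ) : HasDerivAt (fun s : ℝ => (1 - s)/2) (-(1/2) : ℝ) t := by
  have : HasDerivAt (fun s : ℝ => (1 - s)/2) ((0 - 1)/2) t :=
    (((hasDerivAt_const t (1:ℝ)).sub (hasDerivAt_id t)).div_const 2)
  convert this using 1; norm_num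

lemma hasDerivAt_jacobi (j : ℕ) (a b t : ℝ) :
    HasDerivAt (fun s => jacobi j a b s) (jD1 j a b t) t := by
  have : HasDerivAt (fun s => ∑ k ∈ Finset.range (j+1), jc j a b k * ((1 - s)/2) ^ k)
      (jD1 j a b t) t := by
    apply HasDerivAt.fun_sum
    intro k _
    exact ((hasDerivAt_u t).pow k).const_mul _
  exact this.congr_deriv rfl |>.congr_of_eventuallyEq
    (Filter.Eventually.of_forall fun s => (jacobi_eq_sum j a b s))

lemma hasDerivAt_jD1 (j : ℕ) (a b t : ℝ) :
    HasDerivAt (fun s => jD1 j a b s) (jD2 j a b t) t := by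
  apply HasDerivAt.fun_sum
  intro k _
  exact ((((hasDerivAt_u t).pow (k-1)).const_mul ((k:ℝ))).mul_const _).const_mul _

lemma jc_key (j' k : ℕ) (a b : ℝ) (ha : -1 < a) :
    4*((k:ℝ)+2)*((k:ℝ)+1) * jc (j'+1) a b (k+2)
      - 4*((k:ℝ)+1)*((k:ℝ)+1+b) * jc (j'+1) a b (k+1)
    = 4*((j':ℝ)+1+a+b+1)*((j':ℝ)+1+b) * jc j' (a+2) b k := by
  have ha1 : (0:ℝ) < a + 1 := by linarith
  have ha2 : (0:ℝ) < a + 2 := by linarith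
  have hA3 : poch ((a+2)+1) k ≠ 0 := ne_of_gt (poch_pos _ (by linarith) _)
  have hG : poch ((a+2)+1) j' ≠ 0 := ne_of_gt (poch_pos _ (by linarith) _)
  have hak : (0:ℝ) < a + ((k:ℝ)+2) := by have : (0:ℝ) ≤ (k:ℝ) := Nat.cast_nonneg k; linarith
  have haj : (0:ℝ) < a + 1 + ((j':ℝ)+1) := by have : (0:ℝ) ≤ (j':ℝ) := Nat.cast_nonneg j'; linarith
  have h1 : poch (a+1) (k+2) = (a+1)*((a+2)*poch ((a+2)+1) k) := by
    rw [poch_succ_left, show a+1+1 = a+2 by ring, poch_succ_left]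
  have h2 : poch (a+1) (k+1) = (a+1)*((a+2)*poch ((a+2)+1) k) / (a + ((k:ℝ)+2)) := by
    rw [eq_div_iff (ne_of_gt hak), ← h1]
    have := poch_succ (a+1) (k+1)
    rw [this]; push_cast; ring
  have h3 : poch (-((j':ℝ)+1)) (k+1) = -((j':ℝ)+1) * poch (-(j':ℝ)) k := by
    rw [poch_succ_left, show -((j':ℝ)+1)+1 = -(j':ℝ) by ring]
  have h4 : poch (-((j':ℝ)+1)) (k+2)
      = -((j':ℝ)+1) * poch (-(j':ℝ)) k * (-((j':ℝ)+1)+((k:ℝ)+1)) := by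
    rw [poch_succ, h3]; push_cast; ring
  have h5 : poch ((j':ℝ)+1+a+b+1) (k+1)
      = ((j':ℝ)+1+a+b+1) * poch ((j':ℝ)+(a+2)+b+1) k := by
    rw [poch_succ_left, show (j':ℝ)+1+a+b+1+1 = (j':ℝ)+(a+2)+b+1 by ring]
  have h6 : poch ((j':ℝ)+1+a+b+1) (k+2)
      = ((j':ℝ)+1+a+b+1) * poch ((j':ℝ)+(a+2)+b+1) k * ((j':ℝ)+1+a+b+1+((k:ℝ)+1)) := by
    rw [poch_succ, h5]; push_cast; ring
  have h7 : poch (a+1) (j'+1) = (a+1)*((a+2)*poch ((a+2)+1) j') / (a+1+((j':ℝ)+1)) := by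
    rw [eq_div_iff (ne_of_gt haj)]
    have e1 : poch (a+1) (j'+2) = poch (a+1) (j'+1) * (a+1+((j':ℝ)+1)) := by
      rw [poch_succ]; push_cast; ring
    have e2 : poch (a+1) (j'+2) = (a+1)*((a+2)*poch ((a+2)+1) j') := by
      rw [poch_succ_left, show a+1+1 = a+2 by ring, poch_succ_left]
    rw [← e1, e2]
  have hkf : ((Nat.factorial k : ℝ)) ≠ 0 := Nat.cast_ne_zero.2 (Nat.factorial_ne_zero k)
  have hjf : ((Nat.factorial j' : ℝ)) ≠ 0 := Nat.cast_ne_zero.2 (Nat.factorial_ne_zero j')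
  simp only [jc, Nat.factorial_succ]
  push_cast
  rw [h1, h2, h3, h4, h5, h6, h7]
  field_simp
  ring

lemma jc_top (j' : ℕ) (a b : ℝ) : jc (j'+1) a b (j'+2) = 0 := by
  rw [jc, poch_neg_nat (j'+1) (j'+2) (by omega)]
  ring

lemma key (j' : ℕ) (a b t : ℝ) (ha : -1 < a) :
    8*(1+t)*jD2 (j'+1) a b t + 8*(b+1)*jD1 (j'+1) a b t
    = 4*(((j'+1:ℕ):ℝ)+a+b+1)*(((j'+1:ℕ):ℝ)+b)*jacobi j' (a+2) b t := by
  set u := (1-t)/2 with hu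
  have ht : t = 1 - 2*u := by rw [hu]; ring
  set A : ℕ → ℝ := fun k => 4*(k:ℝ)*((k-1:ℕ):ℝ)*jc (j'+1) a b k * u^(k-2) with hA
  set B : ℕ → ℝ := fun k => -(4*(k:ℝ)*((k:ℝ)+b)*jc (j'+1) a b k * u^(k-1)) with hB
  have step1 : ∀ k ∈ Finset.range (j'+2),
      8*(1+t)*(jc (j'+1) a b k * ((k:ℝ) * (((k-1:ℕ):ℝ) * u ^ (k-1-1) * (-(1/2) : ℝ)) * (-(1/2) : ℝ)))
      + 8*(b+1)*(jc (j'+1) a b k * ((k:ℝ) * u ^ (k-1) * (-(1/2) : ℝ)))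
      = A k + B k := by
    intro k _
    match k with
    | 0 => simp [hA, hB]
    | 1 => simp [hA, hB]; ring
    | (k+2) =>
      simp only [hA, hB, Nat.add_sub_cancel, show k+2-1 = k+1 from rfl,
        show k+2-1-1 = k from rfl, show k+1-1 = k from rfl]
      push_cast
      rw [ht]
      ring
  rw [jD1, jD2, Finset.mul_sum, Finset.mul_sum, ← Finset.sum_add_distrib,
    Finset.sum_congr rfl step1, Finset.sum_add_distrib]
  have hAsum : ∑ k ∈ Finset.range (j'+2), A k = ∑ k ∈ Finset.range (j'+1), A (k+2) := by
    rw [Finset.sum_range_succ' A (j'+1), Finset.sum_range_succ' (fun k => A (k+1)) j',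
      Finset.sum_range_succ (fun k => A (k+2)) j']
    have h0 : A 0 = 0 := by simp [hA]
    have h1 : A (0+1) = 0 := by simp [hA]
    have h2 : A (j'+2) = 0 := by simp [hA, jc_top]
    rw [h0, h1, h2]; ring
  have hBsum : ∑ k ∈ Finset.range (j'+2), B k = ∑ k ∈ Finset.range (j'+1), B (k+1) := by
    rw [Finset.sum_range_succ' B (j'+1)]
    have h0 : B 0 = 0 := by simp [hB]
    rw [h0]; ring
  rw [hAsum, hBsum, ← Finset.sum_add_distrib, jacobi_eq_sum, Finset.mul_sum]
  apply Finset.sum_congr rfl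
  intro k _
  have hkey := jc_key j' k a b ha
  simp only [hA, hB, Nat.add_sub_cancel, show k+2-1 = k+1 from rfl, show k+1-1 = k from rfl]
  push_cast
  push_cast at hkey
  linear_combination u^k * hkey

noncomputable def Sd {d : ℕ} (z : EuclideanSpace ℝ (Fin d)) :
    EuclideanSpace ℝ (Fin d) →L[ℝ] ℝ :=
  ∑ i, (4 * z i) • (EuclideanSpace.proj i : EuclideanSpace ℝ (Fin d) →L[ℝ] ℝ)

lemma norm_sq_eq {d : ℕ} (z : EuclideanSpace ℝ (Fin d)) : ‖z‖^2 = ∑ i, z i * z i := by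
  rw [EuclideanSpace.norm_eq, Real.sq_sqrt (by positivity)]
  exact Finset.sum_congr rfl fun i _ => by rw [Real.norm_eq_abs, sq_abs, sq]

lemma hasFDerivAt_S {d : ℕ} (z : EuclideanSpace ℝ (Fin d)) :
    HasFDerivAt (fun z : EuclideanSpace ℝ (Fin d) => 2*‖z‖^2-1) (Sd z) z := by
  have h1 : ∀ i : Fin d, HasFDerivAt (fun z : EuclideanSpace ℝ (Fin d) => z i * z i)
      ((z i) • (EuclideanSpace.proj i : EuclideanSpace ℝ (Fin d) →L[ℝ] ℝ)
        + (z i) • (EuclideanSpace.proj i : EuclideanSpace ℝ (Fin d) →L[ℝ] ℝ)) z := by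
    intro i
    exact ((EuclideanSpace.proj (𝕜 := ℝ) i).hasFDerivAt (x := z)).mul
      ((EuclideanSpace.proj (𝕜 := ℝ) i).hasFDerivAt (x := z))
  have h2 : HasFDerivAt (fun z : EuclideanSpace ℝ (Fin d) => ∑ i, z i * z i)
      (∑ i, ((z i) • (EuclideanSpace.proj i : EuclideanSpace ℝ (Fin d) →L[ℝ] ℝ)
        + (z i) • (EuclideanSpace.proj i : EuclideanSpace ℝ (Fin d) →L[ℝ] ℝ))) z :=
    HasFDerivAt.fun_sum (fun i _ => h1 i)
  have h3 := (h2.const_mul (2:ℝ)).sub_const (1:ℝ)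
  have h4 : HasFDerivAt (fun z : EuclideanSpace ℝ (Fin d) => 2*‖z‖^2-1)
      ((2:ℝ) • ∑ i, ((z i) • (EuclideanSpace.proj i : EuclideanSpace ℝ (Fin d) →L[ℝ] ℝ)
        + (z i) • (EuclideanSpace.proj i : EuclideanSpace ℝ (Fin d) →L[ℝ] ℝ))) z := by
    refine h3.congr_of_eventuallyEq ?_
    filter_upwards with w
    rw [norm_sq_eq]
  convert h4 using 1
  rw [Sd, Finset.smul_sum]
  refine Finset.sum_congr rfl fun i _ => ?_
  module

lemma Sd_apply {d : ℕ} (z : EuclideanSpace ℝ (Fin d)) (i : Fin d) :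
    Sd z (EuclideanSpace.single i 1) = 4 * z i := by
  rw [Sd]
  simp [EuclideanSpace.single_apply]

lemma euler {d : ℕ} (m : ℕ) (Y : EuclideanSpace ℝ (Fin d) → ℝ)
    (hYd : Differentiable ℝ Y)
    (hhom : ∀ (c : ℝ) (x : EuclideanSpace ℝ (Fin d)), Y (c • x) = c ^ m * Y x)
    (x : EuclideanSpace ℝ (Fin d)) :
    ∑ i, x i * pd i Y x = (m:ℝ) * Y x := by
  have hg : HasDerivAt (fun c : ℝ => c • x) x 1 := by
    simpa using (hasDerivAt_id (1:ℝ)).smul_const x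
  have h1 : HasDerivAt (fun c : ℝ => Y (c • x)) ((fderiv ℝ Y x) x) 1 := by
    have h := ((hYd ((1:ℝ) • x)).hasFDerivAt).comp_hasDerivAt (1:ℝ) hg
    rw [one_smul] at h; exact h
  have h2 : HasDerivAt (fun c : ℝ => c ^ m * Y x) ((m:ℝ) * Y x) 1 := by
    simpa using (hasDerivAt_pow m (1:ℝ)).mul_const (Y x)
  have heq : (fun c : ℝ => Y (c • x)) = fun c : ℝ => c ^ m * Y x :=
    funext fun c => hhom c x
  rw [heq] at h1
  have hfx : (fderiv ℝ Y x) x = (m:ℝ) * Y x := h1.unique h2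
  have hx : ∑ i, x i • EuclideanSpace.single i (1:ℝ) = x := by
    have := (EuclideanSpace.basisFun (Fin d) ℝ).toBasis.sum_repr x
    simpa [EuclideanSpace.basisFun_apply] using this
  calc ∑ i, x i * pd i Y x
      = (fderiv ℝ Y x) (∑ i, x i • EuclideanSpace.single i (1:ℝ)) := by
        rw [map_sum]
        exact Finset.sum_congr rfl fun i _ => by
          rw [ContinuousLinearMap.map_smul, smul_eq_mul]; rfl
    _ = (fderiv ℝ Y x) x := by rw [hx]
    _ = (m:ℝ) * Y x := hfx

lemma lap_formula {d : ℕ} (m : ℕ) (Y : EuclideanSpace ℝ (Fin d) → ℝ) (hs : ContDiff ℝ ⊤ Y)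
    (hhom : ∀ (c : ℝ) (x : EuclideanSpace ℝ (Fin d)), Y (c • x) = c ^ m * Y x)
    (hharm : ∀ x, lap Y x = 0)
    (f f1 f2 : ℝ → ℝ) (hf1 : ∀ t, HasDerivAt f (f1 t) t) (hf2 : ∀ t, HasDerivAt f1 (f2 t) t)
    (x : EuclideanSpace ℝ (Fin d)) :
    lap (fun z => f (2*‖z‖^2-1) * Y z) x
    = (16*‖x‖^2 * f2 (2*‖x‖^2-1) + (4*(d:ℝ) + 8*(m:ℝ)) * f1 (2*‖x‖^2-1)) * Y x := by
  have hYd : Differentiable ℝ Y := hs.differentiable (by simp)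
  have hY'z : ∀ z, HasFDerivAt Y (fderiv ℝ Y z) z := fun z => (hYd z).hasFDerivAt
  have hY1cd : ∀ i : Fin d, ContDiff ℝ ⊤ (pd i Y) := by
    intro i
    have hfd : ContDiff ℝ ⊤ (fun z => fderiv ℝ Y z) := hs.fderiv_right le_top
    exact hfd.clm_apply contDiff_const
  have hY1d : ∀ i : Fin d, Differentiable ℝ (pd i Y) := fun i =>
    (hY1cd i).differentiable (by simp)
  -- first derivative of the product
  have hF : ∀ z, HasFDerivAt (fun z => f (2*‖z‖^2-1) * Y z)
      ((f (2*‖z‖^2-1)) • (fderiv ℝ Y z) + (Y z) • (f1 (2*‖z‖^2-1) • Sd z)) z := fun z =>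
    (((hf1 _).comp_hasFDerivAt z (hasFDerivAt_S z)).mul (hY'z z))
  have hpdF : ∀ i, pd i (fun z => f (2*‖z‖^2-1) * Y z)
      = fun z => f (2*‖z‖^2-1) * pd i Y z + Y z * (f1 (2*‖z‖^2-1) * (4 * z i)) := by
    intro i
    funext z
    rw [pd, (hF z).fderiv]
    simp only [ContinuousLinearMap.add_apply, ContinuousLinearMap.smul_apply, Sd_apply,
      smul_eq_mul]
    rfl
  -- second derivatives
  have h4zi : ∀ i : Fin d, HasFDerivAt (fun z : EuclideanSpace ℝ (Fin d) => (4:ℝ) * z i)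
      ((4:ℝ) • (EuclideanSpace.proj i : EuclideanSpace ℝ (Fin d) →L[ℝ] ℝ)) x :=
    fun i => ((EuclideanSpace.proj (𝕜 := ℝ) i).hasFDerivAt (x := x)).const_mul (4:ℝ)
  have hpd2 : ∀ i, pd i (pd i (fun z => f (2*‖z‖^2-1) * Y z)) x
      = f (2*‖x‖^2-1) * pd i (pd i Y) x + pd i Y x * (f1 (2*‖x‖^2-1) * (4 * x i))
        + (Y x * (f1 (2*‖x‖^2-1) * 4 + 4 * x i * (f2 (2*‖x‖^2-1) * (4 * x i)))
           + f1 (2*‖x‖^2-1) * (4 * x i) * pd i Y x) := by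
    intro i
    rw [hpdF i]
    have h1 : HasFDerivAt (fun z => f (2*‖z‖^2-1) * pd i Y z)
        ((f (2*‖x‖^2-1)) • (fderiv ℝ (pd i Y) x)
          + (pd i Y x) • (f1 (2*‖x‖^2-1) • Sd x)) x :=
      ((hf1 _).comp_hasFDerivAt x (hasFDerivAt_S x)).mul ((hY1d i x).hasFDerivAt)
    have h2b : HasFDerivAt (fun z : EuclideanSpace ℝ (Fin d) => f1 (2*‖z‖^2-1) * (4 * z i))
        ((f1 (2*‖x‖^2-1)) • ((4:ℝ) • (EuclideanSpace.proj i : EuclideanSpace ℝ (Fin d) →L[ℝ] ℝ))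
          + (4 * x i) • (f2 (2*‖x‖^2-1) • Sd x)) x :=
      ((hf2 _).comp_hasFDerivAt x (hasFDerivAt_S x)).mul (h4zi i)
    have h2 : HasFDerivAt (fun z => Y z * (f1 (2*‖z‖^2-1) * (4 * z i)))
        ((Y x) • ((f1 (2*‖x‖^2-1)) • ((4:ℝ) • (EuclideanSpace.proj i : EuclideanSpace ℝ (Fin d) →L[ℝ] ℝ))
            + (4 * x i) • (f2 (2*‖x‖^2-1) • Sd x))
          + (f1 (2*‖x‖^2-1) * (4 * x i)) • (fderiv ℝ Y x)) x :=
      (hY'z x).mul h2b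
    rw [pd, (h1.fun_add h2).fderiv]
    simp only [ContinuousLinearMap.add_apply, ContinuousLinearMap.smul_apply, Sd_apply,
      smul_eq_mul, PiLp.proj_apply, EuclideanSpace.single_apply]
    simp only [eq_self_iff_true, if_true]
    rw [show pd i Y x = (fderiv ℝ Y x) (EuclideanSpace.single i 1) from rfl]
    rw [show pd i (pd i Y) x = (fderiv ℝ (pd i Y) x) (EuclideanSpace.single i 1) from rfl]
    ring
  rw [lap, Finset.sum_congr rfl fun i _ => hpd2 i]
  rw [Finset.sum_add_distrib, Finset.sum_add_distrib, Finset.sum_add_distrib]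
  have e1 : ∑ i, f (2*‖x‖^2-1) * pd i (pd i Y) x = 0 := by
    rw [← Finset.mul_sum, show (∑ i, pd i (pd i Y) x) = lap Y x from rfl, hharm x, mul_zero]
  have e2 : ∑ i : Fin d, pd i Y x * (f1 (2*‖x‖^2-1) * (4 * x i))
      = 4 * f1 (2*‖x‖^2-1) * ((m:ℝ) * Y x) := by
    rw [← euler m Y hYd hhom x, Finset.mul_sum]
    exact Finset.sum_congr rfl fun i _ => by ring
  have e3 : ∑ i : Fin d, Y x * (f1 (2*‖x‖^2-1) * 4 + 4 * x i * (f2 (2*‖x‖^2-1) * (4 * x i)))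
      = Y x * (4*(d:ℝ) * f1 (2*‖x‖^2-1) + 16*‖x‖^2 * f2 (2*‖x‖^2-1)) := by
    have h1 : ∀ i : Fin d, Y x * (f1 (2*‖x‖^2-1) * 4 + 4 * x i * (f2 (2*‖x‖^2-1) * (4 * x i)))
        = Y x * (f1 (2*‖x‖^2-1) * 4) + (16 * Y x * f2 (2*‖x‖^2-1)) * (x i * x i) := fun i => by
      ring
    rw [Finset.sum_congr rfl fun i _ => h1 i, Finset.sum_add_distrib, Finset.sum_const,
      ← Finset.mul_sum, ← norm_sq_eq]
    simp only [Finset.card_univ, Fintype.card_fin, nsmul_eq_mul]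
    ring
  have e4 : ∑ i : Fin d, f1 (2*‖x‖^2-1) * (4 * x i) * pd i Y x
      = 4 * f1 (2*‖x‖^2-1) * ((m:ℝ) * Y x) := by
    rw [← euler m Y hYd hhom x, Finset.mul_sum]
    exact Finset.sum_congr rfl fun i _ => by ring
  rw [e1, e2, e3, e4]
  ring

/-- `Δ P_{j,ν}^{n,μ} = 4(n-j+μ+d/2)(n-j+(d-2)/2) P_{j-1,ν}^{n-2,μ+2}` for `j ≥ 1`,
and `Δ P_{0,ν}^{n,μ} = 0`, where `P_{j,ν}^{n,μ}(x) = P_j^{(μ, n-2j+(d-2)/2)}(2‖x‖²-1) Yν(x)`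
with `Yν` a spherical harmonic of degree `n - 2j` of unit `L²(S^{d-1})` norm. -/
theorem stmt8 (d : ℕ) (hd : 1 ≤ d) (mu : ℝ) (hmu : -1 < mu) (n j : ℕ) (hjn : 2 * j ≤ n)
    (Y : EuclideanSpace ℝ (Fin d) → ℝ) (hs : ContDiff ℝ ⊤ Y)
    (hhom : ∀ (c : ℝ) (x : EuclideanSpace ℝ (Fin d)), Y (c • x) = c ^ (n - 2 * j) * Y x)
    (hharm : ∀ x, lap Y x = 0)
    (hnorm1 : (∫ x in Metric.sphere (0 : EuclideanSpace ℝ (Fin d)) 1,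
        Y x ^ 2 ∂(μH[(d : ℝ) - 1]))
      = (μH[(d : ℝ) - 1] (Metric.sphere (0 : EuclideanSpace ℝ (Fin d)) 1)).toReal) :
    (1 ≤ j → ∀ x, lap (fun z : EuclideanSpace ℝ (Fin d) =>
          jacobi j mu ((n : ℝ) - 2 * j + ((d : ℝ) - 2) / 2) (2 * ‖z‖ ^ 2 - 1) * Y z) x
        = 4 * ((n : ℝ) - j + mu + (d : ℝ) / 2) * ((n : ℝ) - j + ((d : ℝ) - 2) / 2) *
          (jacobi (j - 1) (mu + 2) ((n : ℝ) - 2 * j + ((d : ℝ) - 2) / 2)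
              (2 * ‖x‖ ^ 2 - 1) * Y x)) ∧
    (j = 0 → ∀ x, lap (fun z : EuclideanSpace ℝ (Fin d) =>
        jacobi 0 mu ((n : ℝ) + ((d : ℝ) - 2) / 2) (2 * ‖z‖ ^ 2 - 1) * Y z) x = 0) := by
  constructor
  · intro hj x
    obtain ⟨j', rfl⟩ : ∃ j', j = j' + 1 := ⟨j - 1, by omega⟩
    have hmain := lap_formula (n - 2*(j'+1)) Y hs hhom hharm
      (jacobi (j'+1) mu ((n : ℝ) - 2 * ((j'+1 : ℕ) : ℝ) + ((d : ℝ) - 2) / 2))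
      (jD1 (j'+1) mu ((n : ℝ) - 2 * ((j'+1 : ℕ) : ℝ) + ((d : ℝ) - 2) / 2))
      (jD2 (j'+1) mu ((n : ℝ) - 2 * ((j'+1 : ℕ) : ℝ) + ((d : ℝ) - 2) / 2))
      (hasDerivAt_jacobi _ _ _) (hasDerivAt_jD1 _ _ _) x
    rw [hmain]
    have hkey := key j' mu ((n : ℝ) - 2 * ((j'+1 : ℕ) : ℝ) + ((d : ℝ) - 2) / 2)
      (2*‖x‖^2-1) hmu
    have hmr : ((n - 2*(j'+1) : ℕ) : ℝ) = (n : ℝ) - 2 * ((j'+1 : ℕ) : ℝ) := by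
      have := Nat.cast_sub (R := ℝ) hjn
      push_cast at this ⊢
      linarith
    simp only [Nat.add_sub_cancel]
    push_cast at hkey hmr ⊢
    linear_combination Y x * hkey
      + 8 * jD1 (j'+1) mu ((n : ℝ) - 2 * ((j' : ℝ)+1) + ((d : ℝ) - 2) / 2) (2*‖x‖^2-1)
        * Y x * hmr
  · intro hj x
    subst hj
    have h1 : ∀ t : ℝ, jacobi 0 mu ((n : ℝ) + ((d : ℝ) - 2) / 2) t = 1 := by
      intro t
      simp [jacobi, poch]
    have h2 : (fun z : EuclideanSpace ℝ (Fin d) =>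
        jacobi 0 mu ((n : ℝ) + ((d : ℝ) - 2) / 2) (2 * ‖z‖ ^ 2 - 1) * Y z) = Y :=
      funext fun z => by rw [h1, one_mul]
    rw [h2]
    exact hharm x
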